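/- In any play ρ from q₁ of the QBF-reduction game 𝒢_ψ, Cost_{n+1}(ρ) < +∞ if and only if Cost_{n+2}(ρ) = +∞; moreover, if ρ reaches t_{n+1}, then (Cost_i(ρ) ≤ 2m for all clause-players i ∈ {1,...,n}) if and only if ρ visits, for each clause C_i, some vertex that is a literal of C_i. -/

import Mathlib

open scoped Classical

namespace SPE

variable {V : Type*} {P : Type*}

/-- Vertices of the extended game: a base vertex together with the set of players
having already visited their target set. -/
abbrev XV (V P : Type*) := V × Set P

/-- Edges of the extended game induced by base edges `E` and target sets `F`. -/
def XEdge (E : V → V → Prop) (F : P → Set V) (a b : XV V P) : Prop :=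
  E a.1 b.1 ∧ b.2 = a.2 ∪ {i | b.1 ∈ F i}

/-- Plays of the extended game starting at `x`. -/
def IsPlay (E : V → V → Prop) (F : P → Set V) (x : XV V P) (ρ : ℕ → XV V P) : Prop :=
  ρ 0 = x ∧ ∀ k, XEdge E F (ρ k) (ρ (k + 1))

/-- Cost of player `i` along the suffix `ρ_{≥ n}`: the least `k` such that `i` belongs to
the second component of `ρ (n + k)`, and `⊤` if there is no such `k`. -/
noncomputable def costFrom (ρ : ℕ → XV V P) (n : ℕ) (i : P) : ℕ∞ :=
  sInf ((fun k : ℕ => (k : ℕ∞)) '' {k | i ∈ (ρ (n + k)).2})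

/-- Cost of player `i` along the play `ρ` of the extended game. -/
noncomputable def cost (ρ : ℕ → XV V P) (i : P) : ℕ∞ := costFrom ρ 0 i

/-- `λ`-consistency of a play. -/
def Consistent (own : V → P) (lam : XV V P → ℕ∞) (ρ : ℕ → XV V P) : Prop :=
  ∀ n, costFrom ρ n (own (ρ n).1) ≤ lam (ρ n)

/-- The set `Λ(x)` of `λ`-consistent plays from `x`. -/
def Lam (E : V → V → Prop) (F : P → Set V) (own : V → P) (lam : XV V P → ℕ∞)
    (x : XV V P) : Set (ℕ → XV V P) :=
  {ρ | IsPlay E F x ρ ∧ Consistent own lam ρ}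

/-- The initial labeling `λ⁰`. -/
noncomputable def lam0 (own : V → P) : XV V P → ℕ∞ :=
  fun v => if own v.1 ∈ v.2 then 0 else ⊤

/-- The labeling update operator. -/
noncomputable def update (E : V → V → Prop) (F : P → Set V) (own : V → P)
    (lam : XV V P → ℕ∞) (v : XV V P) : ℕ∞ :=
  if own v.1 ∈ v.2 then 0
  else ⨅ w ∈ {w : XV V P | XEdge E F v w},
    (1 + sSup ((fun ρ => cost ρ (own v.1)) '' Lam E F own lam w))

/-- Prepend a finite list in front of an infinite sequence. -/
def listAppendSeq {α : Type*} (h : List α) (ρ : ℕ → α) : ℕ → α :=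
  fun k => if hk : k < h.length then h.get ⟨k, hk⟩ else ρ (k - h.length)

/-- Plays of the base game from `v0`. -/
def IsPlayB (E : V → V → Prop) (v0 : V) (ρ : ℕ → V) : Prop :=
  ρ 0 = v0 ∧ ∀ k, E (ρ k) (ρ (k + 1))

/-- Cost of player `i` of the play `h·ρ` in the base game. -/
noncomputable def costB (F : P → Set V) (h : List V) (ρ : ℕ → V) (i : P) : ℕ∞ :=
  sInf ((fun k : ℕ => (k : ℕ∞)) '' {k | listAppendSeq h ρ k ∈ F i})

/-- Validity of a strategy profile in the base game. -/
def StratValidB (E : V → V → Prop) (σ : List V → V → V) : Prop := ∀ h v, E v (σ h v)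

/-- The outcome of a strategy profile of the base game after history `h` from `v`. -/
def outcomeB (σ : List V → V → V) : List V → V → ℕ → V
  | _, v, 0 => v
  | h, v, n + 1 => outcomeB σ (h ++ [v]) (σ h v) n

/-- `h·v` is a history of the initialized base game. -/
def IsHistoryB (E : V → V → Prop) (v0 : V) (h : List V) (v : V) : Prop :=
  (h ++ [v]).head? = some v0 ∧ (h ++ [v]).Chain' E

/-- `τ` is a unilateral deviation of player `i` from `σ` in the base game. -/
def DeviationB (own : V → P) (σ τ : List V → V → V) (i : P) : Prop :=
  ∀ h v, own v ≠ i → τ h v = σ h v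

/-- Subgame perfect equilibrium of the initialized base game. -/
def IsSPEB (E : V → V → Prop) (F : P → Set V) (own : V → P) (v0 : V)
    (σ : List V → V → V) : Prop :=
  StratValidB E σ ∧
  ∀ h v, IsHistoryB E v0 h v → ∀ (i : P) τ, StratValidB E τ →
    DeviationB own σ τ i →
    costB F h (outcomeB σ h v) i ≤ costB F h (outcomeB τ h v) i

/-! ### The QBF reduction game `𝒢_ψ` -/

/-- Vertices of the game `𝒢_ψ`: quantifier vertices `q k`, literal vertices `lit k b`,
clause vertices `c j`, and sinks `t j` (where `t ⟨n, _⟩` is the sink `t_{n+1}`). -/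
inductive QVtx (m n : ℕ) : Type
  | q : Fin m → QVtx m n
  | lit : Fin m → Bool → QVtx m n
  | c : Fin n → QVtx m n
  | t : Fin (n + 1) → QVtx m n

/-- Edges of the game `𝒢_ψ`. -/
inductive QEdge (m n : ℕ) : QVtx m n → QVtx m n → Prop
  | qlit (k : Fin m) (b : Bool) : QEdge m n (.q k) (.lit k b)
  | litq (k : Fin m) (b : Bool) (h : k.val + 1 < m) :
      QEdge m n (.lit k b) (.q ⟨k.val + 1, h⟩)
  | litc (k : Fin m) (b : Bool) (h : k.val + 1 = m) (hn : 0 < n) :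
      QEdge m n (.lit k b) (.c ⟨0, hn⟩)
  | ct (j : Fin n) : QEdge m n (.c j) (.t ⟨j.val, Nat.lt_succ_of_lt j.isLt⟩)
  | cc (j : Fin n) (h : j.val + 1 < n) : QEdge m n (.c j) (.c ⟨j.val + 1, h⟩)
  | clast (j : Fin n) (h : j.val + 1 = n) : QEdge m n (.c j) (.t ⟨n, Nat.lt_succ_self n⟩)
  | tt (j : Fin (n + 1)) : QEdge m n (.t j) (.t j)

/-- Owner of each vertex: clause-player `j` owns `c j`; player `n` (the paper's
player `n+1`) owns the existential quantifier vertices, player `n+1` (the paper's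
player `n+2`) owns the universal ones; other vertices have a single successor and
their owner is irrelevant. -/
def qOwn (m n : ℕ) : QVtx m n → Fin (n + 2)
  | .q k => if k.val % 2 = 0 then ⟨n, by omega⟩ else ⟨n + 1, by omega⟩
  | .lit _ _ => ⟨n, by omega⟩
  | .c j => ⟨j.val, Nat.lt_of_lt_of_le j.isLt (by omega)⟩
  | .t _ => ⟨n, by omega⟩

/-- Target sets: `F_j = {literals of C_j} ∪ {t_j}` for clause players `j < n`,
`F_{n} = {t_{n+1}}` and `F_{n+1} = {t_1, …, t_n}`. -/
def qF {m n : ℕ} (Cl : Fin n → Finset (Fin m × Bool)) : Fin (n + 2) → Set (QVtx m n) :=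
  fun i =>
    {v | (∃ hi : i.val < n,
            (∃ p ∈ Cl ⟨i.val, hi⟩, v = QVtx.lit p.1 p.2) ∨
            v = QVtx.t ⟨i.val, by omega⟩) ∨
         (i.val = n ∧ v = QVtx.t ⟨n, Nat.lt_succ_self n⟩) ∨
         (i.val = n + 1 ∧ ∃ j : Fin n, v = QVtx.t ⟨j.val, Nat.lt_succ_of_lt j.isLt⟩)}

/-- A valuation satisfies the conjunction of clauses `C_1 ∧ … ∧ C_n`. -/
def qSat {m n : ℕ} (Cl : Fin n → Finset (Fin m × Bool)) (ν : Fin m → Bool) : Prop :=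
  ∀ j, ∃ p ∈ Cl j, ν p.1 = p.2

/-- Truth of `Q₁x₁ … Q_m x_m (C₁ ∧ … ∧ C_n)` with alternating quantifiers
(`Q₁ = ∃`), given the partial assignment `l` of the first variables. -/
def qbfAux {m n : ℕ} (Cl : Fin n → Finset (Fin m × Bool)) (l : List Bool) : Prop :=
  if _h : m ≤ l.length then qSat Cl fun v => l.getD v.val false
  else if l.length % 2 = 0 then ∃ b, qbfAux Cl (l ++ [b])
  else ∀ b, qbfAux Cl (l ++ [b])
termination_by m - l.length
decreasing_by
  all_goals simp only [List.length_append, List.length_cons, List.length_nil]; omega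

/-- Truth of the fully quantified Boolean formula `ψ`. -/
def QBFTrue {m n : ℕ} (Cl : Fin n → Finset (Fin m × Bool)) : Prop := qbfAux Cl []

/-! ### Auxiliary lemmas for Statement 18 -/

lemma sInf_cast_le_iff (A : Set ℕ) (N : ℕ) :
    sInf ((fun k : ℕ => (k : ℕ∞)) '' A) ≤ (N : ℕ∞) ↔ ∃ k ∈ A, k ≤ N := by
  constructor
  · intro h
    by_contra hc
    push_neg at hc
    have h1 : ((N : ℕ∞) + 1) ≤ sInf ((fun k : ℕ => (k : ℕ∞)) '' A) := by
      apply le_sInf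
      rintro b ⟨k, hk, rfl⟩
      have := hc k hk
      show ((N : ℕ∞) + 1) ≤ (k : ℕ∞)
      rw [show ((N : ℕ∞) + 1) = ((N + 1 : ℕ) : ℕ∞) by push_cast; ring]
      exact_mod_cast this
    have h2 : (N : ℕ∞) + 1 ≤ N := le_trans h1 h
    have := ENat.add_one_le_iff (show (N : ℕ∞) ≠ ⊤ by simp) |>.mp h2
    exact lt_irrefl _ this
  · rintro ⟨k, hk, hkN⟩
    refine le_trans (sInf_le ⟨k, hk, rfl⟩) ?_
    show (k : ℕ∞) ≤ N
    exact_mod_cast hkN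

lemma sInf_cast_lt_top_iff (A : Set ℕ) :
    sInf ((fun k : ℕ => (k : ℕ∞)) '' A) < ⊤ ↔ A.Nonempty := by
  constructor
  · intro h
    by_contra hc
    rw [Set.not_nonempty_iff_eq_empty] at hc
    simp [hc] at h
  · rintro ⟨k, hk⟩
    refine lt_of_le_of_lt (sInf_le ⟨k, hk, rfl⟩) ?_
    simp [lt_top_iff_ne_top]

lemma listAppendSeq_nil {α : Type*} (ρ : ℕ → α) : listAppendSeq [] ρ = ρ :=
  funext fun k => by simp [listAppendSeq]

section QStruct

variable {m n : ℕ}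

lemma qedge_t {j : Fin (n + 1)} {b : QVtx m n} (h : QEdge m n (.t j) b) : b = .t j := by
  cases h; rfl

lemma qedge_q {k : Fin m} {b : QVtx m n} (h : QEdge m n (.q k) b) :
    ∃ bb, b = .lit k bb := by
  cases h; exact ⟨_, rfl⟩

lemma qedge_lit {k : Fin m} {bb : Bool} {b : QVtx m n} (h : QEdge m n (.lit k bb) b) :
    (∃ h' : k.val + 1 < m, b = .q ⟨k.val + 1, h'⟩) ∨
    (k.val + 1 = m ∧ ∃ hn : 0 < n, b = .c ⟨0, hn⟩) := by
  cases h with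
  | litq k b h => exact Or.inl ⟨h, rfl⟩
  | litc k b h hn => exact Or.inr ⟨h, hn, rfl⟩

lemma qedge_c {j : Fin n} {b : QVtx m n} (h : QEdge m n (.c j) b) :
    b = .t ⟨j.val, Nat.lt_succ_of_lt j.isLt⟩ ∨
    (∃ h' : j.val + 1 < n, b = .c ⟨j.val + 1, h'⟩) ∨
    (j.val + 1 = n ∧ b = .t ⟨n, Nat.lt_succ_self n⟩) := by
  cases h with
  | ct j => exact Or.inl rfl
  | cc j h => exact Or.inr (Or.inl ⟨h, rfl⟩)
  | clast j h => exact Or.inr (Or.inr ⟨h, rfl⟩)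

/-- Rank function witnessing progress towards sinks. -/
def qRank : QVtx m n → ℕ
  | .q k => 2 * (m - k.val) + n
  | .lit k _ => 2 * (m - k.val - 1) + n + 1
  | .c j => n - j.val
  | .t _ => 0

lemma qRank_decr {a b : QVtx m n} (hab : QEdge m n a b) (ha : ∀ j, a ≠ .t j) :
    qRank b < qRank a := by
  cases hab with
  | qlit k b => have := k.isLt; simp only [qRank]; omega
  | litq k b h => simp only [qRank]; omega
  | litc k b h hn => simp only [qRank]; omega
  | ct j => have := j.isLt; simp only [qRank]; omega
  | cc j h => simp only [qRank]; omega
  | clast j h => have := j.isLt; simp only [qRank]; omega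
  | tt j => exact absurd rfl (ha j)

variable {ρ : ℕ → QVtx m n} (hE : ∀ k, QEdge m n (ρ k) (ρ (k + 1)))

include hE

lemma qreach_sink : ∃ k j, ρ k = .t j := by
  by_contra hc
  push_neg at hc
  have hdec : ∀ k, qRank (ρ (k + 1)) < qRank (ρ k) := fun k =>
    qRank_decr (hE k) (fun j h => hc k j h)
  have hle : ∀ k, qRank (ρ k) + k ≤ qRank (ρ 0) := by
    intro k
    induction k with
    | zero => omega
    | succ k ih => have := hdec k; omega
  have := hle (qRank (ρ 0) + 1)
  omega

lemma qsink_absorb {a : ℕ} {j : Fin (n + 1)} (ha : ρ a = .t j) :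
    ∀ d, ρ (a + d) = .t j := by
  intro d
  induction d with
  | zero => exact ha
  | succ d ih =>
    have := hE (a + d)
    rw [ih] at this
    exact qedge_t this

lemma qsink_unique {a b : ℕ} {j j' : Fin (n + 1)} (ha : ρ a = .t j) (hb : ρ b = .t j') :
    j = j' := by
  rcases le_total a b with h | h
  · have h1 := qsink_absorb hE ha (b - a)
    rw [show a + (b - a) = b by omega] at h1
    exact QVtx.t.inj (h1.symm.trans hb)
  · have h1 := qsink_absorb hE hb (a - b)
    rw [show b + (a - b) = a by omega] at h1
    exact (QVtx.t.inj (h1.symm.trans ha)).symm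

variable (hm : 0 < m) (hn : 0 < n) (h0 : ρ 0 = .q ⟨0, hm⟩)

include h0

lemma qphase1 : ∀ k, (h : k < m) →
    ρ (2 * k) = .q ⟨k, h⟩ ∧ ∃ b, ρ (2 * k + 1) = .lit ⟨k, h⟩ b := by
  intro k
  induction k with
  | zero =>
    intro h
    refine ⟨h0, ?_⟩
    have := hE 0
    rw [h0] at this
    exact qedge_q this
  | succ k ih =>
    intro h
    obtain ⟨-, b, hb⟩ := ih (by omega)
    have he := hE (2 * k + 1)
    rw [hb] at he
    rcases qedge_lit he with ⟨h', hq⟩ | ⟨h', -⟩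
    · rw [show 2 * k + 1 + 1 = 2 * (k + 1) by ring] at hq
      refine ⟨hq, ?_⟩
      have := hE (2 * (k + 1))
      rw [hq] at this
      exact qedge_q this
    · have h'' : k + 1 = m := h'
      omega

lemma qphase2 (hn : 0 < n) : ρ (2 * m) = .c ⟨0, hn⟩ := by
  obtain ⟨-, b, hb⟩ := qphase1 hE hm h0 (m - 1) (by omega)
  have he := hE (2 * (m - 1) + 1)
  rw [hb] at he
  rcases qedge_lit he with ⟨h', -⟩ | ⟨-, hn', hc⟩
  · have h'' : m - 1 + 1 < m := h'
    omega
  · rw [show 2 * (m - 1) + 1 + 1 = 2 * m by omega] at hc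
    exact hc

lemma qphase3 (hn : 0 < n) : ∀ d, (∃ j, ρ (2 * m + d) = .c j) ∨ ∃ j, ρ (2 * m + d) = .t j := by
  intro d
  induction d with
  | zero => exact Or.inl ⟨_, qphase2 hE hm h0 hn⟩
  | succ d ih =>
    rcases ih with ⟨j, hj⟩ | ⟨j, hj⟩
    · have he := hE (2 * m + d)
      rw [hj] at he
      rcases qedge_c he with h | ⟨h', h⟩ | ⟨-, h⟩
      · exact Or.inr ⟨_, h⟩
      · exact Or.inl ⟨_, h⟩
      · exact Or.inr ⟨_, h⟩
    · have he := hE (2 * m + d)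
      rw [hj] at he
      exact Or.inr ⟨_, qedge_t he⟩

lemma qlit_early (hn : 0 < n) {k : ℕ} {p : Fin m} {b : Bool} (h : ρ k = .lit p b) :
    k < 2 * m := by
  by_contra hc
  push_neg at hc
  rcases qphase3 hE hm h0 hn (k - 2 * m) with ⟨j, hj⟩ | ⟨j, hj⟩ <;>
    rw [show 2 * m + (k - 2 * m) = k by omega, h] at hj <;> cases hj

end QStruct

section QMem

variable {m n : ℕ} (Cl : Fin n → Finset (Fin m × Bool))

lemma mem_qF_top {i : Fin (n + 2)} (hi : i.val = n) (v : QVtx m n) :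
    v ∈ qF Cl i ↔ v = QVtx.t ⟨n, Nat.lt_succ_self n⟩ := by
  simp only [qF, Set.mem_setOf_eq, hi]
  constructor
  · rintro (⟨hlt, -⟩ | ⟨-, h⟩ | ⟨heq, -⟩)
    · omega
    · exact h
    · omega
  · intro h
    refine Or.inr (Or.inl ⟨?_, h⟩)
    trivial

lemma mem_qF_last {i : Fin (n + 2)} (hi : i.val = n + 1) (v : QVtx m n) :
    v ∈ qF Cl i ↔ ∃ j : Fin n, v = QVtx.t ⟨j.val, Nat.lt_succ_of_lt j.isLt⟩ := by
  simp only [qF, Set.mem_setOf_eq, hi]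
  constructor
  · rintro (⟨hlt, -⟩ | ⟨heq, -⟩ | ⟨-, h⟩)
    · omega
    · omega
    · exact h
  · intro h
    refine Or.inr (Or.inr ⟨?_, h⟩)
    trivial

lemma mem_qF_clause {i : Fin (n + 2)} (hi : i.val < n) (v : QVtx m n) :
    v ∈ qF Cl i ↔ (∃ p ∈ Cl ⟨i.val, hi⟩, v = QVtx.lit p.1 p.2) ∨
      v = QVtx.t ⟨i.val, by omega⟩ := by
  simp only [qF, Set.mem_setOf_eq]
  constructor
  · rintro (⟨hlt, h⟩ | ⟨heq, -⟩ | ⟨heq, -⟩)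
    · exact h
    · omega
    · omega
  · intro h
    exact Or.inl ⟨hi, h⟩

end QMem


/-- in any play `ρ` from `q₁` of the QBF-reduction game `𝒢_ψ`,
player `n+1` has finite cost iff player `n+2` has infinite cost; moreover, if `ρ`
reaches `t_{n+1}`, then every clause player has cost at most `2m` iff `ρ` visits a
literal of every clause. -/
theorem stmt18 (m n : ℕ) (hm : 0 < m) (hn : 0 < n)
    (Cl : Fin n → Finset (Fin m × Bool))
    (ρ : ℕ → QVtx m n) (hρ : IsPlayB (QEdge m n) (QVtx.q ⟨0, hm⟩) ρ) :
    (costB (qF Cl) [] ρ ⟨n, by omega⟩ < ⊤ ↔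
      costB (qF Cl) [] ρ ⟨n + 1, by omega⟩ = ⊤) ∧
    ((∃ k, ρ k = QVtx.t ⟨n, Nat.lt_succ_self n⟩) →
      ((∀ i : Fin (n + 2), i.val < n → costB (qF Cl) [] ρ i ≤ ((2 * m : ℕ) : ℕ∞)) ↔
        ∀ j : Fin n, ∃ k, ∃ p ∈ Cl j, ρ k = QVtx.lit p.1 p.2)) := by
  obtain ⟨h0, hE⟩ := hρ
  have hAnil : ∀ i : Fin (n + 2),
      costB (qF Cl) [] ρ i = sInf ((fun k : ℕ => (k : ℕ∞)) '' {k | ρ k ∈ qF Cl i}) := by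
    intro i
    simp [costB, listAppendSeq_nil]
  constructor
  · -- Part 1
    have hs1 : {k | ρ k ∈ qF Cl (⟨n, by omega⟩ : Fin (n + 2))} =
        {k | ρ k = QVtx.t ⟨n, Nat.lt_succ_self n⟩} := by
      ext k
      simp only [Set.mem_setOf_eq]
      exact mem_qF_top Cl rfl (ρ k)
    have hs2 : {k | ρ k ∈ qF Cl (⟨n + 1, by omega⟩ : Fin (n + 2))} =
        {k | ∃ j : Fin n, ρ k = QVtx.t ⟨j.val, Nat.lt_succ_of_lt j.isLt⟩} := by
      ext k
      simp only [Set.mem_setOf_eq]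
      exact mem_qF_last Cl rfl (ρ k)
    rw [hAnil, hAnil, hs1, hs2, sInf_cast_lt_top_iff]
    have htop : sInf ((fun k : ℕ => (k : ℕ∞)) ''
          {k | ∃ j : Fin n, ρ k = QVtx.t ⟨j.val, Nat.lt_succ_of_lt j.isLt⟩}) = ⊤ ↔
        ¬ ({k | ∃ j : Fin n, ρ k = QVtx.t ⟨j.val, Nat.lt_succ_of_lt j.isLt⟩}.Nonempty) := by
      rw [← sInf_cast_lt_top_iff, lt_top_iff_ne_top, not_not]
    rw [htop]
    constructor
    · rintro ⟨k, hk⟩ ⟨k', j, hk'⟩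
      have hu := qsink_unique hE hk hk'
      have hv := congrArg Fin.val hu
      simp only at hv
      have := j.isLt
      omega
    · intro h
      obtain ⟨k, j, hk⟩ := qreach_sink hE
      by_cases hj : j.val < n
      · exact absurd ⟨k, ⟨⟨j.val, hj⟩, hk⟩⟩ h
      · have hjn : j = ⟨n, Nat.lt_succ_self n⟩ := Fin.ext (show j.val = n by have := j.isLt; omega)
        exact ⟨k, by rw [← hjn]; exact hk⟩
  · -- Part 2
    rintro ⟨K, hK⟩
    have hnot : ∀ (k : ℕ) (j : Fin n), ρ k ≠ QVtx.t ⟨j.val, Nat.lt_succ_of_lt j.isLt⟩ := by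
      intro k j hk
      have hu := qsink_unique hE hK hk
      have hv := congrArg Fin.val hu
      simp only at hv
      have := j.isLt
      omega
    constructor
    · intro h j
      have hc := h ⟨j.val, by have := j.isLt; omega⟩ j.isLt
      rw [hAnil, sInf_cast_le_iff] at hc
      obtain ⟨k, hk, hk2m⟩ := hc
      rcases (mem_qF_clause Cl (show ((⟨j.val, by have := j.isLt; omega⟩ : Fin (n + 2))).val < n from j.isLt)
          (ρ k)).mp hk with ⟨p, hp, hpl⟩ | ht
      · exact ⟨k, p, hp, hpl⟩
      · exact absurd ht (hnot k j)
    · intro h i hi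
      obtain ⟨k, p, hp, hpl⟩ := h ⟨i.val, hi⟩
      rw [hAnil, sInf_cast_le_iff]
      refine ⟨k, (mem_qF_clause Cl hi (ρ k)).mpr (Or.inl ⟨p, hp, hpl⟩), ?_⟩
      have := qlit_early hE hm h0 hn hpl
      omega


end SPE
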